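/- Let t > 0 and ℓ > 0 be reals, and for θ ∈ ℝ set q(θ) = 1 + 2·sinh(ℓ/2)²·(1 + θ²). Then ∫_{θ ∈ ℝ} ∫_{r = arcosh(q(θ))}^{∞} r·e^{−r²/(4t)}·(cosh r − q(θ))^{−1/2} dr dθ = √2·π·t·e^{−ℓ²/(4t)} / sinh(ℓ/2). -/

import Mathlib

open Real MeasureTheory

/-- The inverse of `cosh : [0,∞) → [1,∞)`. -/
noncomputable def arcosh (x : ℝ) : ℝ := Real.log (x + Real.sqrt (x ^ 2 - 1))

section helpers
open Set

lemma image_c_sin (c : ℝ) (hc : 0 < c) :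
    (fun u => c * Real.sin u) '' Ioo (-(π/2)) (π/2) = Ioo (-c) c := by
  ext θ
  simp only [mem_image, mem_Ioo]
  constructor
  · rintro ⟨u, ⟨hu1, hu2⟩, rfl⟩
    have h1 : Real.sin u < 1 := by
      have := Real.strictMonoOn_sin (a := u) (b := π/2) ⟨hu1.le, hu2.le⟩
        ⟨by linarith [Real.pi_pos], le_refl _⟩ hu2
      simpa using this
    have h2 : -1 < Real.sin u := by
      have := Real.strictMonoOn_sin (a := -(π/2)) (b := u)
        ⟨le_refl _, by linarith [Real.pi_pos]⟩ ⟨hu1.le, hu2.le⟩ hu1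
      simpa using this
    constructor <;> nlinarith
  · rintro ⟨h1, h2⟩
    have hd1 : (-1 : ℝ) < θ / c := by rw [lt_div_iff₀ hc]; linarith
    have hd2 : θ / c < 1 := by rw [div_lt_one hc]; linarith
    refine ⟨Real.arcsin (θ / c), ⟨?_, ?_⟩, ?_⟩
    · exact Real.neg_pi_div_two_lt_arcsin.mpr hd1
    · exact Real.arcsin_lt_pi_div_two.mpr hd2
    · rw [Real.sin_arcsin hd1.le hd2.le]; field_simp

lemma thetaInt (A B : ℝ) (hA : 0 < A) (hB : 0 < B) :
    IntegrableOn (fun θ : ℝ => (Real.sqrt (A - B * θ ^ 2))⁻¹) (Ioo (-(Real.sqrt (A/B))) (Real.sqrt (A/B))) ∧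
    ∫ θ in Ioo (-(Real.sqrt (A/B))) (Real.sqrt (A/B)), (Real.sqrt (A - B * θ ^ 2))⁻¹ = π / Real.sqrt B := by
  set c := Real.sqrt (A / B) with hc_def
  have hc : 0 < c := Real.sqrt_pos.mpr (div_pos hA hB)
  have hc2 : B * c ^ 2 = A := by
    rw [hc_def, Real.sq_sqrt (div_pos hA hB).le]; field_simp
  have himg := image_c_sin c hc
  have hmeas : MeasurableSet (Ioo (-(π/2)) (π/2)) := measurableSet_Ioo
  have hderiv : ∀ u ∈ Ioo (-(π/2)) (π/2),
      HasDerivWithinAt (fun u => c * Real.sin u) (c * Real.cos u) (Ioo (-(π/2)) (π/2)) u := by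
    intro u _
    exact ((Real.hasDerivAt_sin u).const_mul c).hasDerivWithinAt
  have hinj : InjOn (fun u => c * Real.sin u) (Ioo (-(π/2)) (π/2)) := by
    intro x hx y hy hxy
    have := Real.injOn_sin (Ioo_subset_Icc_self hx) (Ioo_subset_Icc_self hy)
    rcases mul_left_cancel₀ hc.ne' hxy with h
    exact this h
  -- the transformed integrand is constant 1/√B on the open interval
  have key : EqOn (fun u => |c * Real.cos u| • (Real.sqrt (A - B * (c * Real.sin u) ^ 2))⁻¹)
      (fun _ => (Real.sqrt B)⁻¹) (Ioo (-(π/2)) (π/2)) := by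
    intro u hu
    obtain ⟨hu1, hu2⟩ := hu
    have hcos : 0 < Real.cos u := Real.cos_pos_of_mem_Ioo ⟨by simpa using hu1, hu2⟩
    have h1 : A - B * (c * Real.sin u) ^ 2 = B * c ^ 2 * Real.cos u ^ 2 := by
      have := Real.sin_sq_add_cos_sq u
      nlinarith
    simp only [smul_eq_mul]
    rw [h1, abs_of_pos (by positivity)]
    rw [show B * c ^ 2 * Real.cos u ^ 2 = (Real.sqrt B * c * Real.cos u) ^ 2 by
      rw [mul_pow, mul_pow, Real.sq_sqrt hB.le]]
    rw [Real.sqrt_sq (by positivity)]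
    field_simp
  constructor
  · rw [← himg]
    rw [integrableOn_image_iff_integrableOn_abs_deriv_smul hmeas hderiv hinj]
    exact (integrableOn_const measure_Ioo_lt_top.ne).congr_fun key.symm hmeas
  · rw [← himg, integral_image_eq_integral_abs_deriv_smul hmeas hderiv hinj]
    rw [setIntegral_congr_fun hmeas key]
    rw [setIntegral_const, Real.volume_real_Ioo, show π/2 - -(π/2) = π by ring,
      max_eq_left Real.pi_pos.le, smul_eq_mul, div_eq_mul_inv]

lemma cosh_arcosh {x : ℝ} (hx : 1 ≤ x) : Real.cosh (_root_.arcosh x) = x := by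
  have hs : Real.sqrt (x ^ 2 - 1) ^ 2 = x ^ 2 - 1 := Real.sq_sqrt (by nlinarith)
  have hsn : 0 ≤ Real.sqrt (x ^ 2 - 1) := Real.sqrt_nonneg _
  have hy : (0:ℝ) < x + Real.sqrt (x ^ 2 - 1) := by nlinarith
  have hinv : (x + Real.sqrt (x ^ 2 - 1))⁻¹ = x - Real.sqrt (x ^ 2 - 1) := by
    refine inv_eq_of_mul_eq_one_right ?_
    nlinarith
  rw [_root_.arcosh, Real.cosh_eq, Real.exp_log hy, Real.exp_neg, Real.exp_log hy, hinv]
  ring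

lemma arcosh_pos {x : ℝ} (hx : 1 < x) : 0 < _root_.arcosh x := by
  have hy : (1:ℝ) < x + Real.sqrt (x ^ 2 - 1) := by
    have := Real.sqrt_nonneg (x ^ 2 - 1); linarith
  exact Real.log_pos hy

lemma arcosh_lt_iff {x r : ℝ} (hx : 1 < x) (hr : 0 ≤ r) :
    _root_.arcosh x < r ↔ x < Real.cosh r := by
  have h := Real.cosh_strictMonoOn.lt_iff_lt (α := ℝ) (_root_.arcosh_pos hx).le hr
  rw [_root_.cosh_arcosh hx.le] at h
  exact h.symm

lemma rInt (t a : ℝ) (ht : 0 < t) (ha : 0 ≤ a) :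
    IntegrableOn (fun r : ℝ => r * Real.exp (-r ^ 2 / (4 * t))) (Ioi a) ∧
    ∫ r in Ioi a, r * Real.exp (-r ^ 2 / (4 * t)) = 2 * t * Real.exp (-a ^ 2 / (4 * t)) := by
  have hderiv : ∀ x ∈ Ici a, HasDerivAt (fun r : ℝ => -(2 * t) * Real.exp (-r ^ 2 / (4 * t)))
      (x * Real.exp (-x ^ 2 / (4 * t))) x := by
    intro x _
    have h1 : HasDerivAt (fun r : ℝ => -r ^ 2 / (4 * t)) (-(2 * x) / (4 * t)) x := by
      have := ((hasDerivAt_pow 2 x).neg).div_const (4 * t)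
      simpa using this
    have h2 := (h1.exp).const_mul (-(2 * t))
    refine h2.congr_deriv ?_
    field_simp
    ring
  have hpos : ∀ x ∈ Ioi a, 0 ≤ x * Real.exp (-x ^ 2 / (4 * t)) := by
    intro x hx
    have : (0:ℝ) ≤ x := le_trans ha (le_of_lt hx)
    positivity
  have htend : Filter.Tendsto (fun r : ℝ => -(2 * t) * Real.exp (-r ^ 2 / (4 * t)))
      Filter.atTop (nhds 0) := by
    have h1 : Filter.Tendsto (fun r : ℝ => -r ^ 2 / (4 * t)) Filter.atTop Filter.atBot := by
      apply Filter.Tendsto.atBot_div_const (by positivity)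
      exact Filter.tendsto_neg_atBot_iff.mpr (Filter.tendsto_pow_atTop two_ne_zero)
    have h2 := Real.tendsto_exp_atBot.comp h1
    have := h2.const_mul (-(2 * t))
    simpa using this
  constructor
  · exact integrableOn_Ioi_deriv_of_nonneg' hderiv hpos htend
  · have := integral_Ioi_of_hasDerivAt_of_nonneg' hderiv hpos htend
    rw [this]
    ring

lemma main_aux (t ℓ s : ℝ) (ht : 0 < t) (hℓ : 0 < ℓ) (hs : 0 < s)
    (hcosh : Real.cosh ℓ = 1 + 2 * s ^ 2) :
    (∫ θ : ℝ, ∫ r in Set.Ioi (_root_.arcosh (1 + 2 * s ^ 2 * (1 + θ ^ 2))),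
        r * Real.exp (-r ^ 2 / (4 * t)) /
          Real.sqrt (Real.cosh r - (1 + 2 * s ^ 2 * (1 + θ ^ 2)))) =
      Real.sqrt 2 * π * t * Real.exp (-ℓ ^ 2 / (4 * t)) / s := by
  have hq1 : ∀ θ : ℝ, 1 < 1 + 2 * s ^ 2 * (1 + θ ^ 2) := fun θ => by nlinarith [sq_nonneg θ]
  have hqℓ : ∀ θ : ℝ, Real.cosh ℓ ≤ 1 + 2 * s ^ 2 * (1 + θ ^ 2) := fun θ => by
    rw [hcosh]; nlinarith [sq_nonneg θ]
  set F : ℝ × ℝ → ℝ := fun p =>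
    if _root_.arcosh (1 + 2 * s ^ 2 * (1 + p.1 ^ 2)) < p.2 then
      p.2 * Real.exp (-p.2 ^ 2 / (4 * t)) /
        Real.sqrt (Real.cosh p.2 - (1 + 2 * s ^ 2 * (1 + p.1 ^ 2)))
    else 0 with hF_def
  have hF_nonneg : ∀ p : ℝ × ℝ, 0 ≤ F p := by
    intro p
    rw [hF_def]
    dsimp only
    split_ifs with h
    · have hp2 : 0 < p.2 := lt_trans (_root_.arcosh_pos (hq1 p.1)) h
      exact div_nonneg (mul_nonneg hp2.le (Real.exp_pos _).le) (Real.sqrt_nonneg _)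
    · exact le_refl 0
  have he_cont : Continuous (fun θ : ℝ => 1 + 2 * s ^ 2 * (1 + θ ^ 2)) :=
    continuous_const.add (continuous_const.mul (continuous_const.add (continuous_pow 2)))
  have hg_meas : Measurable (fun θ : ℝ => _root_.arcosh (1 + 2 * s ^ 2 * (1 + θ ^ 2))) := by
    have hcont : Continuous (fun θ : ℝ => (1 + 2 * s ^ 2 * (1 + θ ^ 2)) +
        Real.sqrt ((1 + 2 * s ^ 2 * (1 + θ ^ 2)) ^ 2 - 1)) :=
      he_cont.add (Real.continuous_sqrt.comp ((he_cont.pow 2).sub continuous_const))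
    exact Real.measurable_log.comp hcont.measurable
  have hF_meas : Measurable F := by
    rw [hF_def]
    refine Measurable.ite ?_ ?_ measurable_const
    · exact measurableSet_lt (hg_meas.comp measurable_fst) measurable_snd
    · apply Measurable.div
      · exact (continuous_snd.mul (Real.continuous_exp.comp
          (((continuous_snd.pow 2).neg).div_const _))).measurable
      · exact (Real.continuous_sqrt.comp ((Real.continuous_cosh.comp continuous_snd).sub
          (he_cont.comp continuous_fst))).measurable
  have h1 : ∀ θ : ℝ, (∫ r in Set.Ioi (_root_.arcosh (1 + 2 * s ^ 2 * (1 + θ ^ 2))),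
      r * Real.exp (-r ^ 2 / (4 * t)) /
        Real.sqrt (Real.cosh r - (1 + 2 * s ^ 2 * (1 + θ ^ 2))))
      = ∫ r : ℝ, F (θ, r) := by
    intro θ
    rw [← integral_indicator measurableSet_Ioi]
    congr 1
  have hsec : ∀ r : ℝ, Integrable (fun θ => F (θ, r)) ∧
      (∫ θ : ℝ, F (θ, r)) = Set.indicator (Set.Ioi ℓ)
        (fun r' => r' * Real.exp (-r' ^ 2 / (4 * t)) * (π / Real.sqrt (2 * s ^ 2))) r := by
    intro r
    by_cases hr : ℓ < r
    · have hr0 : 0 < r := lt_trans hℓ hr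
      have hA : 0 < Real.cosh r - Real.cosh ℓ := by
        have habs : |ℓ| < |r| := by rw [abs_of_pos hℓ, abs_of_pos hr0]; exact hr
        have := (Real.cosh_lt_cosh (x := ℓ) (y := r)).mpr habs
        linarith
      have hB : (0:ℝ) < 2 * s ^ 2 := by positivity
      set A := Real.cosh r - Real.cosh ℓ with hA_def
      set c := Real.sqrt (A / (2 * s ^ 2)) with hc_def
      have hc : 0 < c := Real.sqrt_pos.mpr (div_pos hA hB)
      have hc2 : 2 * s ^ 2 * c ^ 2 = A := by
        rw [hc_def, Real.sq_sqrt (div_pos hA hB).le]; field_simp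
      have hsec_eq : (fun θ => F (θ, r)) = Set.indicator (Set.Ioo (-c) c)
          (fun θ => (r * Real.exp (-r ^ 2 / (4 * t))) *
            (Real.sqrt (A - 2 * s ^ 2 * θ ^ 2))⁻¹) := by
        funext θ
        rw [hF_def]
        dsimp only
        rw [Set.indicator_apply]
        have hmem : _root_.arcosh (1 + 2 * s ^ 2 * (1 + θ ^ 2)) < r ↔ θ ∈ Set.Ioo (-c) c := by
          rw [arcosh_lt_iff (hq1 θ) hr0.le, Set.mem_Ioo]
          constructor
          · intro h
            have hθ2 : θ ^ 2 < c ^ 2 := by nlinarith [hcosh, hc2, hB]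
            constructor <;> nlinarith [hθ2, hc]
          · rintro ⟨hm1, hm2⟩
            have hθ2 : θ ^ 2 < c ^ 2 := by
              nlinarith [mul_pos (sub_pos.mpr hm2) (show (0:ℝ) < c + θ by linarith)]
            nlinarith [hcosh, hc2, hB, mul_lt_mul_of_pos_left hθ2 hB]
        by_cases hmem' : θ ∈ Set.Ioo (-c) c
        · rw [if_pos (hmem.mpr hmem'), if_pos hmem']
          have : Real.cosh r - (1 + 2 * s ^ 2 * (1 + θ ^ 2)) = A - 2 * s ^ 2 * θ ^ 2 := by
            rw [hA_def, hcosh]; ring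
          rw [this, div_eq_mul_inv]
        · rw [if_neg (fun h => hmem' (hmem.mp h)), if_neg hmem']
      constructor
      · rw [hsec_eq]
        rw [integrable_indicator_iff measurableSet_Ioo]
        exact ((thetaInt A (2 * s ^ 2) hA hB).1.const_mul _)
      · rw [hsec_eq, integral_indicator measurableSet_Ioo, Set.indicator_of_mem (Set.mem_Ioi.mpr hr),
          integral_const_mul, (thetaInt A (2 * s ^ 2) hA hB).2]
    · have hzero : ∀ θ : ℝ, F (θ, r) = 0 := by
        intro θ
        rw [hF_def]
        dsimp only
        rw [if_neg]
        intro h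
        have h0 : 0 < r := lt_trans (_root_.arcosh_pos (hq1 θ)) h
        rw [arcosh_lt_iff (hq1 θ) h0.le] at h
        have hle : Real.cosh r ≤ Real.cosh ℓ := Real.cosh_le_cosh.mpr
          (by rw [abs_of_pos h0, abs_of_pos hℓ]; exact le_of_not_gt hr)
        have := hqℓ θ
        linarith
      constructor
      · have hfz : (fun θ : ℝ => F (θ, r)) = fun _ => 0 := funext hzero
        rw [hfz]
        exact integrable_zero _ _ _
      · rw [Set.indicator_of_notMem (by simpa using hr)]
        simp [hzero]
  have hG_int : Integrable (Set.indicator (Set.Ioi ℓ)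
      (fun r' => r' * Real.exp (-r' ^ 2 / (4 * t)) * (π / Real.sqrt (2 * s ^ 2)))) := by
    rw [integrable_indicator_iff measurableSet_Ioi]
    exact ((rInt t ℓ ht hℓ.le).1.mul_const _)
  have hF_int : Integrable F (volume.prod volume) := by
    refine (integrable_prod_iff' hF_meas.aestronglyMeasurable).mpr ⟨?_, ?_⟩
    · exact Filter.Eventually.of_forall fun r => (hsec r).1
    · have : (fun r => ∫ θ, ‖F (θ, r)‖) = Set.indicator (Set.Ioi ℓ)
          (fun r' => r' * Real.exp (-r' ^ 2 / (4 * t)) * (π / Real.sqrt (2 * s ^ 2))) := by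
        funext r
        rw [show (fun θ => ‖F (θ, r)‖) = fun θ => F (θ, r) from
          funext fun θ => Real.norm_of_nonneg (hF_nonneg _)]
        exact (hsec r).2
      rw [this]
      exact hG_int
  calc (∫ θ : ℝ, ∫ r in Set.Ioi (_root_.arcosh (1 + 2 * s ^ 2 * (1 + θ ^ 2))),
        r * Real.exp (-r ^ 2 / (4 * t)) /
          Real.sqrt (Real.cosh r - (1 + 2 * s ^ 2 * (1 + θ ^ 2))))
      = ∫ θ : ℝ, ∫ r : ℝ, F (θ, r) := by
        exact integral_congr_ae (Filter.Eventually.of_forall h1)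
    _ = ∫ r : ℝ, ∫ θ : ℝ, F (θ, r) := integral_integral_swap hF_int
    _ = ∫ r : ℝ, Set.indicator (Set.Ioi ℓ)
          (fun r' => r' * Real.exp (-r' ^ 2 / (4 * t)) * (π / Real.sqrt (2 * s ^ 2))) r := by
        exact integral_congr_ae (Filter.Eventually.of_forall fun r => (hsec r).2)
    _ = ∫ r in Set.Ioi ℓ, r * Real.exp (-r ^ 2 / (4 * t)) * (π / Real.sqrt (2 * s ^ 2)) :=
        integral_indicator measurableSet_Ioi
    _ = (∫ r in Set.Ioi ℓ, r * Real.exp (-r ^ 2 / (4 * t))) * (π / Real.sqrt (2 * s ^ 2)) :=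
        integral_mul_const _ _
    _ = (2 * t * Real.exp (-ℓ ^ 2 / (4 * t))) * (π / Real.sqrt (2 * s ^ 2)) := by
        rw [(rInt t ℓ ht hℓ.le).2]
    _ = Real.sqrt 2 * π * t * Real.exp (-ℓ ^ 2 / (4 * t)) / s := by
        have h2 : Real.sqrt (2 * s ^ 2) = Real.sqrt 2 * s := by
          rw [Real.sqrt_mul (by norm_num : (0:ℝ) ≤ 2), Real.sqrt_sq hs.le]
        rw [h2]
        have hs2 : Real.sqrt 2 ≠ 0 := by positivity
        field_simp
        linear_combination (-1 : ℝ) *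
          Real.sq_sqrt (show (0:ℝ) ≤ 2 by norm_num)


end helpers

/-- The Abel-transform computation: with `q θ = 1 + 2 sinh(ℓ/2)² (1 + θ²)`,
`∫_ℝ ∫_{arcosh (q θ)}^∞ r e^{-r²/(4t)} (cosh r - q θ)^{-1/2} dr dθ
  = √2 π t e^{-ℓ²/(4t)} / sinh(ℓ/2)`. -/
theorem stmt5 (t ℓ : ℝ) (ht : 0 < t) (hℓ : 0 < ℓ) :
    (∫ θ : ℝ, ∫ r in Set.Ioi (_root_.arcosh (1 + 2 * Real.sinh (ℓ / 2) ^ 2 * (1 + θ ^ 2))),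
        r * Real.exp (-r ^ 2 / (4 * t)) /
          Real.sqrt (Real.cosh r - (1 + 2 * Real.sinh (ℓ / 2) ^ 2 * (1 + θ ^ 2)))) =
      Real.sqrt 2 * π * t * Real.exp (-ℓ ^ 2 / (4 * t)) / Real.sinh (ℓ / 2) := by
  have hcosh : Real.cosh ℓ = 1 + 2 * Real.sinh (ℓ / 2) ^ 2 := by
    have h1 : Real.cosh ℓ = Real.cosh (2 * (ℓ / 2)) := by congr 1; ring
    rw [h1, Real.cosh_two_mul, Real.cosh_sq]
    ring
  exact main_aux t ℓ (Real.sinh (ℓ / 2)) ht hℓ (Real.sinh_pos_iff.mpr (by linarith)) hcosh
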